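/- Let $h \in L^2(\nu_k)$ with $\|h\|_{L^2(\nu_k)} = 1$, and for each $j \geq 1$ let $B_j$ be a closed ball of positive $\nu_k$-measure contained in the annulus $C_j = \{x \in \mathbb{R}^d : 4^{-(j+1)/(2\gamma+d)} \leq \|x\| \leq 4^{-j/(2\gamma+d)}\}$. Let $a_j = (\nu_k(B_j))^{-1/2}(h - \mathrm{Avg}_{B_j} h)\chi_{B_j}$, where $\mathrm{Avg}_{B_j} h = \frac{1}{\nu_k(B_j)}\int_{B_j} h\, d\nu_k$. Then each $a_j$ is an $L^2_k$-atom, the series $f = \sum_{j=1}^\infty (\nu_k(B_j))^{1/2} a_j$ converges in $L^1(\nu_k) \cap L^2(\nu_k)$, $f \in H^1_k(\mathbb{R}^d)$, and $\|f\|_{H^1_k} \leq \sum_{j=1}^\infty (\nu_k(B_j))^{1/2} \leq \sqrt{\frac{d_k}{2\gamma+d}}$. -/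

import Mathlib

open MeasureTheory Metric Filter Topology Set
open scoped ENNReal NNReal

noncomputable section

/-- The Dunkl weight function. -/
def dunklWeight {d : ℕ} (Rp : Finset (EuclideanSpace ℝ (Fin d)))
    (k : EuclideanSpace ℝ (Fin d) → ℝ) (x : EuclideanSpace ℝ (Fin d)) : ℝ :=
  ∏ ξ ∈ Rp, |(inner ℝ ξ x : ℝ)| ^ (2 * k ξ)

/-- The weighted measure `ν_k`. -/
def dunklMeasure {d : ℕ} (Rp : Finset (EuclideanSpace ℝ (Fin d)))
    (k : EuclideanSpace ℝ (Fin d) → ℝ) : Measure (EuclideanSpace ℝ (Fin d)) :=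
  volume.withDensity fun x => ENNReal.ofReal (dunklWeight Rp k x)

/-- The constant `d_k = ∫_{S^{d-1}} w_k dσ`, where `σ` is the surface measure on the unit
sphere, normalized so that the polar integration formula
`∫ f dx = ∫_0^∞ ∫_{S^{d-1}} f(ry) dσ(y) r^{d-1} dr` holds. -/
def dunklDk {d : ℕ} (Rp : Finset (EuclideanSpace ℝ (Fin d)))
    (k : EuclideanSpace ℝ (Fin d) → ℝ) : ℝ :=
  ∫ y : sphere (0 : EuclideanSpace ℝ (Fin d)) 1, dunklWeight Rp k ↑y
    ∂((volume : Measure (EuclideanSpace ℝ (Fin d))).toSphere)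

/-- The index `γ = ∑_{ξ ∈ R₊} k(ξ)`. -/
def dunklGamma {d : ℕ} (Rp : Finset (EuclideanSpace ℝ (Fin d)))
    (k : EuclideanSpace ℝ (Fin d) → ℝ) : ℝ :=
  ∑ ξ ∈ Rp, k ξ

/-- An `L²_k`-atom supported in the closed ball of center `x₀` and radius `r`. -/
def IsL2Atom {d : ℕ} (ν : Measure (EuclideanSpace ℝ (Fin d)))
    (a : EuclideanSpace ℝ (Fin d) → ℝ) (x₀ : EuclideanSpace ℝ (Fin d)) (r : ℝ) : Prop :=
  MemLp a 2 ν ∧ Function.support a ⊆ closedBall x₀ r ∧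
    (∫ x, |a x| ^ 2 ∂ν) ^ ((1 : ℝ)/2) ≤ (ν (closedBall x₀ r)).toReal ^ (-(1 : ℝ)/2) ∧
    ∫ x in closedBall x₀ r, a x ∂ν = 0

/-- `f = ∑_j λ_j a_j` is an atomic decomposition with `L²_k`-atoms,
the series converging in `L¹(ν_k)` and in `L²(ν_k)`, and `∑_j |λ_j| < ∞`. -/
def IsAtomicDecomp {d : ℕ} (ν : Measure (EuclideanSpace ℝ (Fin d)))
    (f : EuclideanSpace ℝ (Fin d) → ℝ) (lam : ℕ → ℝ)
    (a : ℕ → EuclideanSpace ℝ (Fin d) → ℝ) : Prop :=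
  (∀ j, ∃ (x₀ : EuclideanSpace ℝ (Fin d)) (r : ℝ), 0 < r ∧ IsL2Atom ν (a j) x₀ r) ∧
    Summable (fun j => |lam j|) ∧
    Tendsto (fun N => eLpNorm (fun x => f x - ∑ j ∈ Finset.range N, lam j * a j x) 1 ν)
      atTop (nhds 0) ∧
    Tendsto (fun N => eLpNorm (fun x => f x - ∑ j ∈ Finset.range N, lam j * a j x) 2 ν)
      atTop (nhds 0)

/-- `f` belongs to the atomic Hardy space `H¹_k`. -/
def MemH1 {d : ℕ} (ν : Measure (EuclideanSpace ℝ (Fin d)))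
    (f : EuclideanSpace ℝ (Fin d) → ℝ) : Prop :=
  MemLp f 1 ν ∧ MemLp f 2 ν ∧ ∃ lam a, IsAtomicDecomp ν f lam a

/-- The atomic `H¹_k` norm: infimum of `∑_j |λ_j|` over all atomic decompositions. -/
def H1norm {d : ℕ} (ν : Measure (EuclideanSpace ℝ (Fin d)))
    (f : EuclideanSpace ℝ (Fin d) → ℝ) : ℝ :=
  sInf {s : ℝ | ∃ lam a, IsAtomicDecomp ν f lam a ∧ s = ∑' j, |lam j|}

section AuxLemmas

variable {d : ℕ} (Rp : Finset (EuclideanSpace ℝ (Fin d))) (k : EuclideanSpace ℝ (Fin d) → ℝ)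

lemma rpow_finset_sum {ι : Type*} (s : Finset ι) {r : ℝ} (hr : 0 < r) (c : ι → ℝ) :
    r ^ (∑ i ∈ s, c i) = ∏ i ∈ s, r ^ (c i) := by
  classical
  induction s using Finset.induction_on with
  | empty => simp
  | insert _ _ hx ih =>
    rw [Finset.sum_insert hx, Finset.prod_insert hx, Real.rpow_add hr, ih]

lemma continuous_rpow_const_of_nonneg {c : ℝ} (hc : 0 ≤ c) :
    Continuous fun t : ℝ => t ^ c :=
  continuous_iff_continuousAt.2 fun x => Real.continuousAt_rpow_const x c (Or.inr hc)

lemma dunklWeight_nonneg (x : EuclideanSpace ℝ (Fin d)) : 0 ≤ dunklWeight Rp k x :=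
  Finset.prod_nonneg fun _ _ => Real.rpow_nonneg (abs_nonneg _) _

lemma continuous_dunklWeight (hk : ∀ ξ ∈ Rp, 0 ≤ k ξ) : Continuous (dunklWeight Rp k) := by
  refine continuous_finset_prod _ fun ξ hξ => ?_
  have h1 : Continuous fun x : EuclideanSpace ℝ (Fin d) => |(inner ℝ ξ x : ℝ)| :=
    (continuous_const.inner continuous_id).abs
  exact (continuous_rpow_const_of_nonneg (by linarith [hk ξ hξ])).comp h1

lemma dunklWeight_smul {r : ℝ} (hr : 0 < r)
    (x : EuclideanSpace ℝ (Fin d)) :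
    dunklWeight Rp k (r • x) = r ^ (2 * dunklGamma Rp k) * dunklWeight Rp k x := by
  unfold dunklWeight
  have : ∀ ξ ∈ Rp, |(inner ℝ ξ (r • x) : ℝ)| ^ (2 * k ξ)
      = r ^ (2 * k ξ) * |(inner ℝ ξ x : ℝ)| ^ (2 * k ξ) := by
    intro ξ hξ
    rw [real_inner_smul_right, abs_mul, abs_of_pos hr,
      Real.mul_rpow hr.le (abs_nonneg _)]
  rw [Finset.prod_congr rfl this, Finset.prod_mul_distrib,
    ← rpow_finset_sum Rp hr, dunklGamma, Finset.mul_sum]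

lemma measurable_dunklWeightE (hk : ∀ ξ ∈ Rp, 0 ≤ k ξ) :
    Measurable fun x => ENNReal.ofReal (dunklWeight Rp k x) :=
  ENNReal.measurable_ofReal.comp (continuous_dunklWeight Rp k hk).measurable

lemma dunklMeasure_apply {s : Set (EuclideanSpace ℝ (Fin d))} (hs : MeasurableSet s) :
    dunklMeasure Rp k s = ∫⁻ x in s, ENNReal.ofReal (dunklWeight Rp k x) ∂volume :=
  withDensity_apply _ hs

lemma dunklMeasure_null {s : Set (EuclideanSpace ℝ (Fin d))} (hs : volume s = 0) :
    dunklMeasure Rp k s = 0 :=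
  withDensity_absolutelyContinuous _ _ hs

lemma dunklMeasure_compact_lt_top (hk : ∀ ξ ∈ Rp, 0 ≤ k ξ)
    {s : Set (EuclideanSpace ℝ (Fin d))} (hs : IsCompact s) :
    dunklMeasure Rp k s < ⊤ := by
  obtain ⟨C, hC⟩ := hs.exists_bound_of_continuousOn (continuous_dunklWeight Rp k hk).continuousOn
  rw [dunklMeasure_apply Rp k hs.measurableSet]
  calc ∫⁻ x in s, ENNReal.ofReal (dunklWeight Rp k x) ∂volume
      ≤ ∫⁻ _ in s, ENNReal.ofReal C ∂volume := by
        refine setLIntegral_mono' hs.measurableSet fun x hx => ?_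
        exact ENNReal.ofReal_le_ofReal ((le_abs_self _).trans (hC x hx))
    _ = ENNReal.ofReal C * volume s := by rw [setLIntegral_const]
    _ < ⊤ := ENNReal.mul_lt_top ENNReal.ofReal_lt_top hs.measure_lt_top

end AuxLemmas

section Polar

variable {d : ℕ} (Rp : Finset (EuclideanSpace ℝ (Fin d))) (k : EuclideanSpace ℝ (Fin d) → ℝ)

lemma dunklGamma_nonneg (hk : ∀ ξ ∈ Rp, 0 ≤ k ξ) : 0 ≤ dunklGamma Rp k :=
  Finset.sum_nonneg hk

lemma dunklMeasure_closedBall (hd : 0 < d) (hk : ∀ ξ ∈ Rp, 0 ≤ k ξ) {R : ℝ} (hR : 0 < R) :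
    dunklMeasure Rp k (closedBall (0 : EuclideanSpace ℝ (Fin d)) R) =
      (∫⁻ y : sphere (0 : EuclideanSpace ℝ (Fin d)) 1,
          ENNReal.ofReal (dunklWeight Rp k ↑y) ∂(volume.toSphere))
        * ENNReal.ofReal (R ^ (2 * dunklGamma Rp k + d) / (2 * dunklGamma Rp k + d)) := by
  haveI : Nontrivial (EuclideanSpace ℝ (Fin d)) :=
    Module.nontrivial_of_finrank_pos (R := ℝ) (by rw [finrank_euclideanSpace_fin]; exact hd)
  set γ := dunklGamma Rp k with hγdef
  have hγ : 0 ≤ γ := dunklGamma_nonneg Rp k hk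
  set D : ℝ := 2 * γ + d with hDdef
  have hD : 0 < D := by positivity
  set w := dunklWeight Rp k with hwdef
  set IND : ℝ → ℝ≥0∞ := fun t => if t ≤ R then ENNReal.ofReal (t ^ (2 * γ)) else 0
    with hINDdef
  have hINDmeas : Measurable IND := by
    refine Measurable.ite measurableSet_Iic ?_ measurable_const
    exact ENNReal.measurable_ofReal.comp
      (continuous_rpow_const_of_nonneg (by positivity)).measurable
  set f₁ : sphere (0 : (EuclideanSpace ℝ (Fin d))) 1 → ℝ≥0∞ := fun y => ENNReal.ofReal (w ↑y) with hf₁def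
  set f₂ : Ioi (0 : ℝ) → ℝ≥0∞ := fun t => IND ↑t with hf₂def
  have hf₁meas : Measurable f₁ :=
    ENNReal.measurable_ofReal.comp
      ((continuous_dunklWeight Rp k hk).measurable.comp measurable_subtype_coe)
  have hf₂meas : Measurable f₂ := hINDmeas.comp measurable_subtype_coe
  have hMP : MeasurePreserving (homeomorphUnitSphereProd (EuclideanSpace ℝ (Fin d)))
      ((volume : Measure (EuclideanSpace ℝ (Fin d))).comap Subtype.val)
      ((volume : Measure (EuclideanSpace ℝ (Fin d))).toSphere.prod (Measure.volumeIoiPow (d - 1))) := by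
    have := Measure.measurePreserving_homeomorphUnitSphereProd (volume : Measure (EuclideanSpace ℝ (Fin d)))
    rwa [finrank_euclideanSpace_fin] at this
  have hg_meas : Measurable (fun z : sphere (0 : (EuclideanSpace ℝ (Fin d))) 1 × Ioi (0 : ℝ) => f₁ z.1 * f₂ z.2) :=
    (hf₁meas.comp measurable_fst).mul (hf₂meas.comp measurable_snd)
  have key : ∀ x : ({0}ᶜ : Set (EuclideanSpace ℝ (Fin d))),
      (closedBall (0 : (EuclideanSpace ℝ (Fin d))) R).indicator (fun x => ENNReal.ofReal (w x)) ↑x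
        = f₁ (homeomorphUnitSphereProd (EuclideanSpace ℝ (Fin d)) x).1 * f₂ (homeomorphUnitSphereProd (EuclideanSpace ℝ (Fin d)) x).2 := by
    intro x
    have hx0 : (x : (EuclideanSpace ℝ (Fin d))) ≠ 0 := x.2
    have hnorm : (0 : ℝ) < ‖(x : (EuclideanSpace ℝ (Fin d)))‖ := norm_pos_iff.2 hx0
    simp only [hf₁def, hf₂def, homeomorphUnitSphereProd_apply_fst_coe,
      homeomorphUnitSphereProd_apply_snd_coe, one_smul, div_one]
    show (closedBall (0 : (EuclideanSpace ℝ (Fin d))) R).indicator (fun x => ENNReal.ofReal (w x)) ↑x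
        = ENNReal.ofReal (w (‖(x : (EuclideanSpace ℝ (Fin d)))‖⁻¹ • (x : (EuclideanSpace ℝ (Fin d)))))
            * IND ‖(x : (EuclideanSpace ℝ (Fin d)))‖
    by_cases hxR : ‖(x : (EuclideanSpace ℝ (Fin d)))‖ ≤ R
    · rw [indicator_of_mem (by simpa [mem_closedBall_zero_iff] using hxR),
        hINDdef]
      simp only [if_pos hxR]
      rw [← ENNReal.ofReal_mul (dunklWeight_nonneg Rp k _)]
      congr 1
      have hs := dunklWeight_smul Rp k hnorm (‖(x : (EuclideanSpace ℝ (Fin d)))‖⁻¹ • (x : (EuclideanSpace ℝ (Fin d))))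
      rw [smul_inv_smul₀ hnorm.ne'] at hs
      rw [← hγdef, ← hwdef] at hs
      rw [hs, mul_comm]
    · rw [indicator_of_notMem (by simpa [mem_closedBall_zero_iff] using hxR), hINDdef]
      simp only [if_neg hxR, mul_zero]
  have Icompute : ∫⁻ t : Ioi (0 : ℝ), f₂ t ∂(Measure.volumeIoiPow (d - 1))
      = ENNReal.ofReal (R ^ D / D) := by
    have hfd : Measurable fun r : Ioi (0 : ℝ) => ENNReal.ofReal ((r : ℝ) ^ (d - 1)) :=
      ENNReal.measurable_ofReal.comp (measurable_subtype_coe.pow_const _)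
    rw [Measure.volumeIoiPow, lintegral_withDensity_eq_lintegral_mul _ hfd hf₂meas]
    have : ∀ a : Ioi (0 : ℝ),
        ((fun r : Ioi (0:ℝ) => ENNReal.ofReal ((r : ℝ) ^ (d - 1))) * f₂) a
          = (fun t : ℝ => ENNReal.ofReal (t ^ (d - 1)) * IND t) ↑a := fun a => rfl
    have step : ∫⁻ (a : Ioi (0:ℝ)), (fun t : ℝ => ENNReal.ofReal (t ^ (d - 1)) * IND t) ↑a
          ∂(Measure.comap Subtype.val volume)
        = ∫⁻ t in Ioi (0:ℝ), ENNReal.ofReal (t ^ (d - 1)) * IND t ∂volume :=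
      lintegral_subtype_comap measurableSet_Ioi
        (fun t : ℝ => ENNReal.ofReal (t ^ (d - 1)) * IND t)
    rw [lintegral_congr this, step]
    have hcong : ∫⁻ t in Ioi (0:ℝ), ENNReal.ofReal (t ^ (d - 1)) * IND t ∂volume
        = ∫⁻ t in Ioi (0:ℝ),
            (Ioc (0:ℝ) R).indicator (fun t => ENNReal.ofReal (t ^ (D - 1))) t ∂volume := by
      refine setLIntegral_congr_fun measurableSet_Ioi (fun t ht => ?_)
      by_cases htR : t ≤ R
      · rw [hINDdef]
        simp only [if_pos htR]
        have htm : t ∈ Ioc (0:ℝ) R := ⟨ht, htR⟩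
        rw [indicator_of_mem htm, ← ENNReal.ofReal_mul (pow_nonneg (le_of_lt (mem_Ioi.1 ht)) _)]
        congr 1
        have h1 : (t : ℝ) ^ (d - 1 : ℕ) = t ^ ((d : ℝ) - 1) := by
          rw [← Real.rpow_natCast t (d - 1), Nat.cast_sub hd, Nat.cast_one]
        rw [h1, ← Real.rpow_add ht]
        congr 1
        rw [hDdef]; ring
      · rw [hINDdef]
        simp only [if_neg htR, mul_zero]
        rw [indicator_of_notMem (fun h => htR h.2)]
    rw [hcong, lintegral_indicator measurableSet_Ioc, Measure.restrict_restrict measurableSet_Ioc,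
      inter_eq_self_of_subset_left Ioc_subset_Ioi_self]
    have hint : IntegrableOn (fun t : ℝ => t ^ (D - 1)) (Ioc 0 R) volume :=
      (intervalIntegral.intervalIntegrable_rpow' (by linarith)).1
    rw [← ofReal_integral_eq_lintegral_ofReal hint
      (((ae_restrict_mem measurableSet_Ioc).mono
        (fun t ht => Real.rpow_nonneg ht.1.le _)))]
    congr 1
    rw [← intervalIntegral.integral_of_le hR.le, integral_rpow (Or.inl (by linarith)),
      show D - 1 + 1 = D from by ring, Real.zero_rpow hD.ne', sub_zero]
  calc dunklMeasure Rp k (closedBall (0 : (EuclideanSpace ℝ (Fin d))) R)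
      = ∫⁻ x in closedBall (0:(EuclideanSpace ℝ (Fin d))) R, ENNReal.ofReal (w x) ∂volume :=
        dunklMeasure_apply _ _ measurableSet_closedBall
    _ = ∫⁻ x, (closedBall (0:(EuclideanSpace ℝ (Fin d))) R).indicator (fun x => ENNReal.ofReal (w x)) x ∂volume :=
        (lintegral_indicator measurableSet_closedBall _).symm
    _ = ∫⁻ x in ({0}ᶜ : Set (EuclideanSpace ℝ (Fin d))),
          (closedBall (0:(EuclideanSpace ℝ (Fin d))) R).indicator (fun x => ENNReal.ofReal (w x)) x ∂volume := by
        rw [MeasureTheory.restrict_compl_singleton]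
    _ = ∫⁻ x : ({0}ᶜ : Set (EuclideanSpace ℝ (Fin d))),
          (closedBall (0:(EuclideanSpace ℝ (Fin d))) R).indicator (fun x => ENNReal.ofReal (w x)) ↑x
            ∂((volume : Measure (EuclideanSpace ℝ (Fin d))).comap Subtype.val) :=
        (lintegral_subtype_comap (measurableSet_singleton 0).compl _).symm
    _ = ∫⁻ x : ({0}ᶜ : Set (EuclideanSpace ℝ (Fin d))),
          f₁ (homeomorphUnitSphereProd (EuclideanSpace ℝ (Fin d)) x).1 * f₂ (homeomorphUnitSphereProd (EuclideanSpace ℝ (Fin d)) x).2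
            ∂((volume : Measure (EuclideanSpace ℝ (Fin d))).comap Subtype.val) := lintegral_congr key
    _ = ∫⁻ z : sphere (0:(EuclideanSpace ℝ (Fin d))) 1 × Ioi (0:ℝ), f₁ z.1 * f₂ z.2
          ∂((volume : Measure (EuclideanSpace ℝ (Fin d))).toSphere.prod (Measure.volumeIoiPow (d - 1))) :=
        hMP.lintegral_comp hg_meas
    _ = (∫⁻ y : sphere (0:(EuclideanSpace ℝ (Fin d))) 1, f₁ y ∂volume.toSphere)
          * ∫⁻ t : Ioi (0:ℝ), f₂ t ∂(Measure.volumeIoiPow (d - 1)) :=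
        lintegral_prod_mul hf₁meas.aemeasurable hf₂meas.aemeasurable
    _ = _ := by rw [Icompute]

end Polar

section Cor
variable {d : ℕ} (Rp : Finset (EuclideanSpace ℝ (Fin d))) (k : EuclideanSpace ℝ (Fin d) → ℝ)

lemma dunklDk_eq_toReal (hk : ∀ ξ ∈ Rp, 0 ≤ k ξ) :
    dunklDk Rp k = (∫⁻ y : sphere (0 : EuclideanSpace ℝ (Fin d)) 1,
      ENNReal.ofReal (dunklWeight Rp k ↑y) ∂(volume.toSphere)).toReal := by
  refine integral_eq_lintegral_of_nonneg_ae (ae_of_all _ fun y => dunklWeight_nonneg Rp k _) ?_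
  exact ((continuous_dunklWeight Rp k hk).comp continuous_subtype_val).aestronglyMeasurable

lemma dunklLk_ne_top (hd : 0 < d) (hk : ∀ ξ ∈ Rp, 0 ≤ k ξ) :
    (∫⁻ y : sphere (0 : EuclideanSpace ℝ (Fin d)) 1,
      ENNReal.ofReal (dunklWeight Rp k ↑y) ∂(volume.toSphere)) ≠ ⊤ := by
  have hγ : 0 ≤ dunklGamma Rp k := dunklGamma_nonneg Rp k hk
  have hD : (0:ℝ) < 2 * dunklGamma Rp k + d := by positivity
  have h1 := dunklMeasure_closedBall Rp k hd hk one_pos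
  rw [Real.one_rpow] at h1
  have h2 : dunklMeasure Rp k (closedBall (0 : EuclideanSpace ℝ (Fin d)) 1) < ⊤ :=
    dunklMeasure_compact_lt_top Rp k hk (isCompact_closedBall _ _)
  intro htop
  rw [htop, ENNReal.top_mul (by
    simp only [ne_eq, ENNReal.ofReal_eq_zero, not_le]
    positivity)] at h1
  rw [h1] at h2
  exact absurd h2 (lt_irrefl _)

lemma dunklMeasure_closedBall_toReal (hd : 0 < d) (hk : ∀ ξ ∈ Rp, 0 ≤ k ξ) {R : ℝ}
    (hR : 0 < R) :
    (dunklMeasure Rp k (closedBall (0 : EuclideanSpace ℝ (Fin d)) R)).toReal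
      = dunklDk Rp k * (R ^ (2 * dunklGamma Rp k + d) / (2 * dunklGamma Rp k + d)) := by
  have hγ : 0 ≤ dunklGamma Rp k := dunklGamma_nonneg Rp k hk
  have hD : (0:ℝ) < 2 * dunklGamma Rp k + d := by positivity
  rw [dunklMeasure_closedBall Rp k hd hk hR, ENNReal.toReal_mul,
    ENNReal.toReal_ofReal (div_nonneg (Real.rpow_nonneg hR.le _) hD.le),
    dunklDk_eq_toReal Rp k hk]

lemma dunklDk_nonneg (hk : ∀ ξ ∈ Rp, 0 ≤ k ξ) : 0 ≤ dunklDk Rp k := by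
  rw [dunklDk_eq_toReal Rp k hk]; exact ENNReal.toReal_nonneg

lemma four_rpow_half (a : ℝ) : ((4:ℝ) ^ a) ^ ((1:ℝ)/2) = (2:ℝ) ^ a := by
  have h4 : (4:ℝ) = (2:ℝ) ^ (2:ℝ) := by
    rw [show (2:ℝ) = ((2:ℕ):ℝ) from by norm_num, Real.rpow_natCast]; norm_num
  rw [h4, ← Real.rpow_mul (by norm_num : (0:ℝ) ≤ 2),
    ← Real.rpow_mul (by norm_num : (0:ℝ) ≤ 2)]
  congr 1; ring

lemma lam_le_bound (hd : 0 < d) (hk : ∀ ξ ∈ Rp, 0 ≤ k ξ) {B : Set (EuclideanSpace ℝ (Fin d))}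
    {j : ℕ} (hB : B ⊆ closedBall (0 : EuclideanSpace ℝ (Fin d))
      ((4:ℝ) ^ (-((j:ℝ) + 1) / (2 * dunklGamma Rp k + d)))) :
    (dunklMeasure Rp k B).toReal ^ ((1:ℝ)/2)
      ≤ Real.sqrt (dunklDk Rp k / (2 * dunklGamma Rp k + d)) * (2:ℝ) ^ (-((j:ℝ) + 1)) := by
  have hγ : 0 ≤ dunklGamma Rp k := dunklGamma_nonneg Rp k hk
  set D : ℝ := 2 * dunklGamma Rp k + d with hDdef
  have hD : (0:ℝ) < D := by positivity
  set R : ℝ := (4:ℝ) ^ (-((j:ℝ) + 1) / D) with hRdef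
  have hR : 0 < R := Real.rpow_pos_of_pos (by norm_num) _
  have hfin : dunklMeasure Rp k (closedBall (0 : EuclideanSpace ℝ (Fin d)) R) ≠ ⊤ :=
    (dunklMeasure_compact_lt_top Rp k hk (isCompact_closedBall _ _)).ne
  have hmono : (dunklMeasure Rp k B).toReal
      ≤ (dunklMeasure Rp k (closedBall (0 : EuclideanSpace ℝ (Fin d)) R)).toReal :=
    ENNReal.toReal_mono hfin (measure_mono hB)
  have h1 : (dunklMeasure Rp k B).toReal ^ ((1:ℝ)/2)
      ≤ ((dunklMeasure Rp k (closedBall (0 : EuclideanSpace ℝ (Fin d)) R)).toReal) ^ ((1:ℝ)/2) :=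
    Real.rpow_le_rpow ENNReal.toReal_nonneg hmono (by norm_num)
  refine h1.trans ?_
  rw [dunklMeasure_closedBall_toReal Rp k hd hk hR, ← hDdef]
  have hRD : R ^ D = (4:ℝ) ^ (-((j:ℝ) + 1)) := by
    rw [hRdef, ← Real.rpow_mul (by norm_num : (0:ℝ) ≤ 4), div_mul_cancel₀ _ hD.ne']
  rw [hRD]
  have heq : dunklDk Rp k * ((4:ℝ) ^ (-((j:ℝ) + 1)) / D)
      = (dunklDk Rp k / D) * (4:ℝ) ^ (-((j:ℝ) + 1)) := by ring
  rw [heq, Real.mul_rpow (div_nonneg (dunklDk_nonneg Rp k hk) hD.le)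
    (Real.rpow_nonneg (by norm_num) _), four_rpow_half, Real.sqrt_eq_rpow]

end Cor

section Ball
variable {α : Type*} [MeasurableSpace α] {ν : Measure α} {h : α → ℝ} {B : Set α}

lemma integrableOn_of_memL2 (hfin : ν B ≠ ⊤) (hh : MemLp h 2 ν) : IntegrableOn h B ν := by
  haveI : IsFiniteMeasure (ν.restrict B) :=
    ⟨by rw [Measure.restrict_apply_univ]; exact hfin.lt_top⟩
  exact memLp_one_iff_integrable.1 ((hh.restrict B).mono_exponent (by norm_num))

lemma sq_integrableOn (hh : MemLp h 2 ν) : IntegrableOn (fun x => h x ^ 2) B ν :=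
  (hh.restrict B).integrable_sq

lemma setIntegral_sub_avg (hfin : ν B ≠ ⊤) (hpos : 0 < ν B) (hh : MemLp h 2 ν) :
    ∫ x in B, (h x - (ν B).toReal⁻¹ * ∫ y in B, h y ∂ν) ∂ν = 0 := by
  haveI : IsFiniteMeasure (ν.restrict B) :=
    ⟨by rw [Measure.restrict_apply_univ]; exact hfin.lt_top⟩
  have ht : 0 < (ν B).toReal := ENNReal.toReal_pos hpos.ne' hfin
  rw [integral_sub (integrableOn_of_memL2 hfin hh) (integrable_const _),
    setIntegral_const, smul_eq_mul, measureReal_def]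
  field_simp
  ring

lemma setIntegral_sq_sub_avg_le (hfin : ν B ≠ ⊤) (hpos : 0 < ν B) (hh : MemLp h 2 ν) :
    ∫ x in B, (h x - (ν B).toReal⁻¹ * ∫ y in B, h y ∂ν) ^ 2 ∂ν
      ≤ ∫ x in B, h x ^ 2 ∂ν := by
  haveI : IsFiniteMeasure (ν.restrict B) :=
    ⟨by rw [Measure.restrict_apply_univ]; exact hfin.lt_top⟩
  set t : ℝ := (ν B).toReal with htdef
  have ht : 0 < t := ENNReal.toReal_pos hpos.ne' hfin
  set m : ℝ := t⁻¹ * ∫ y in B, h y ∂ν with hmdef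
  have hIm : ∫ y in B, h y ∂ν = t * m := by rw [hmdef]; field_simp
  have h1 : IntegrableOn h B ν := integrableOn_of_memL2 hfin hh
  have h2 : IntegrableOn (fun x => h x ^ 2) B ν := sq_integrableOn hh
  have key : ∫ x in B, (h x - m) ^ 2 ∂ν = (∫ x in B, h x ^ 2 ∂ν) - m ^ 2 * t := by
    have expand : ∀ x, (h x - m) ^ 2 = h x ^ 2 - 2 * m * h x + m ^ 2 := fun x => by ring
    simp_rw [expand]
    have hsub : IntegrableOn (fun x => h x ^ 2 - 2 * m * h x) B ν :=
      h2.sub (h1.const_mul (2 * m))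
    have hcm : ∫ a in B, 2 * m * h a ∂ν = (2 * m) * ∫ a in B, h a ∂ν := by
      calc ∫ a in B, 2 * m * h a ∂ν = ∫ a in B, (2 * m) • h a ∂ν := by
            simp [smul_eq_mul, mul_assoc]
        _ = (2 * m) • ∫ a in B, h a ∂ν := integral_smul _ _
    rw [integral_add hsub (integrable_const _),
      integral_sub h2 (h1.const_mul (2 * m)), hcm, hIm, setIntegral_const,
      smul_eq_mul, measureReal_def]
    ring
  rw [key]
  nlinarith [sq_nonneg m, ht]

lemma ofReal_norm_eq_coe_nnnorm {E : Type*} [SeminormedAddCommGroup E] (a : E) :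
    ENNReal.ofReal ‖a‖ = (‖a‖₊ : ℝ≥0∞) :=
  ENNReal.ofReal_eq_coe_nnreal (norm_nonneg a)

lemma lintegral_nnnorm_sq_eq (hint : Integrable (fun x => h x ^ 2) ν) :
    ∫⁻ x, (‖h x‖₊ : ℝ≥0∞) ^ (2:ℝ) ∂ν = ENNReal.ofReal (∫ x, h x ^ 2 ∂ν) := by
  rw [ofReal_integral_eq_lintegral_ofReal hint (ae_of_all _ fun x => sq_nonneg _)]
  refine lintegral_congr fun x => ?_
  rw [← ofReal_norm_eq_coe_nnnorm,
    ENNReal.ofReal_rpow_of_nonneg (norm_nonneg _) (by norm_num : (0:ℝ) ≤ 2)]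
  congr 1
  rw [show (2:ℝ) = ((2:ℕ):ℝ) from by norm_num, Real.rpow_natCast, Real.norm_eq_abs, sq_abs]

lemma eLpNorm_two_eq (f : α → ℝ) :
    eLpNorm f 2 ν = (∫⁻ x, (‖f x‖₊ : ℝ≥0∞) ^ (2:ℝ) ∂ν) ^ ((1:ℝ)/2) := by
  rw [eLpNorm_eq_lintegral_rpow_enorm_toReal (by norm_num) (by norm_num)]
  norm_num
  rfl

lemma integral_sq_eq_one (hh : MemLp h 2 ν) (hnorm : eLpNorm h 2 ν = 1) :
    ∫ x, h x ^ 2 ∂ν = 1 := by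
  have hb := lintegral_nnnorm_sq_eq (ν := ν) (h := h) hh.integrable_sq
  have h2 : (∫⁻ x, (‖h x‖₊ : ℝ≥0∞) ^ (2:ℝ) ∂ν) = 1 := by
    have := eLpNorm_two_eq (ν := ν) h
    rw [hnorm] at this
    have h3 : ((∫⁻ x, (‖h x‖₊ : ℝ≥0∞) ^ (2:ℝ) ∂ν) ^ ((1:ℝ)/2)) ^ (2:ℝ) = 1 ^ (2:ℝ) := by
      rw [← this]
    rwa [← ENNReal.rpow_mul, show (1:ℝ)/2 * 2 = 1 from by norm_num, ENNReal.rpow_one,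
      ENNReal.one_rpow] at h3
  rw [h2] at hb
  have hnn : 0 ≤ ∫ x, h x ^ 2 ∂ν := integral_nonneg fun x => sq_nonneg _
  exact_mod_cast (ENNReal.ofReal_eq_one.1 hb.symm)

end Ball

section Ball2
variable {α : Type*} [MeasurableSpace α] {ν : Measure α} {h : α → ℝ} {B : Set α}

lemma lintegral_sq_indicator_le (hB : MeasurableSet B) (hfin : ν B ≠ ⊤) (hpos : 0 < ν B)
    (hh : MemLp h 2 ν) :
    ∫⁻ x, (‖(B.indicator (fun x => h x - (ν B).toReal⁻¹ * ∫ y in B, h y ∂ν)) x‖₊ : ℝ≥0∞)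
        ^ (2:ℝ) ∂ν
      ≤ ∫⁻ x in B, (‖h x‖₊ : ℝ≥0∞) ^ (2:ℝ) ∂ν := by
  haveI : IsFiniteMeasure (ν.restrict B) :=
    ⟨by rw [Measure.restrict_apply_univ]; exact hfin.lt_top⟩
  set m : ℝ := (ν B).toReal⁻¹ * ∫ y in B, h y ∂ν with hmdef
  have hpt : ∀ x, (‖(B.indicator (fun x => h x - m)) x‖₊ : ℝ≥0∞) ^ (2:ℝ)
      = B.indicator (fun x => (‖h x - m‖₊ : ℝ≥0∞) ^ (2:ℝ)) x := by
    intro x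
    by_cases hx : x ∈ B
    · simp [indicator_of_mem hx]
    · simp [indicator_of_notMem hx, ENNReal.zero_rpow_of_pos (by norm_num : (0:ℝ) < 2)]
  rw [lintegral_congr hpt, lintegral_indicator hB]
  have hu2int : Integrable (fun x => (h x - m) ^ 2) (ν.restrict B) :=
    ((hh.restrict B).sub (memLp_const m)).integrable_sq
  rw [lintegral_nnnorm_sq_eq (ν := ν.restrict B) (h := fun x => h x - m) hu2int,
    lintegral_nnnorm_sq_eq (ν := ν.restrict B) (h := h) (sq_integrableOn hh)]
  exact ENNReal.ofReal_le_ofReal (setIntegral_sq_sub_avg_le hfin hpos hh)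

lemma eLpNorm_two_indicator_le_one (hB : MeasurableSet B) (hfin : ν B ≠ ⊤) (hpos : 0 < ν B)
    (hh : MemLp h 2 ν) (hnorm : eLpNorm h 2 ν = 1) :
    eLpNorm (B.indicator (fun x => h x - (ν B).toReal⁻¹ * ∫ y in B, h y ∂ν)) 2 ν ≤ 1 := by
  rw [eLpNorm_two_eq]
  have h1 := lintegral_sq_indicator_le hB hfin hpos hh
  have h2 : ∫⁻ x in B, (‖h x‖₊ : ℝ≥0∞) ^ (2:ℝ) ∂ν ≤ 1 := by
    rw [lintegral_nnnorm_sq_eq (ν := ν.restrict B) (h := h) (sq_integrableOn hh)]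
    rw [show (1 : ℝ≥0∞) = ENNReal.ofReal 1 from by norm_num]
    refine ENNReal.ofReal_le_ofReal ?_
    rw [← integral_sq_eq_one hh hnorm]
    exact setIntegral_le_integral hh.integrable_sq (ae_of_all _ fun x => sq_nonneg _)
  calc (∫⁻ x, (‖(B.indicator (fun x => h x - (ν B).toReal⁻¹ * ∫ y in B, h y ∂ν)) x‖₊ : ℝ≥0∞)
          ^ (2:ℝ) ∂ν) ^ ((1:ℝ)/2)
      ≤ (1 : ℝ≥0∞) ^ ((1:ℝ)/2) := ENNReal.rpow_le_rpow (h1.trans h2) (by norm_num)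
    _ = 1 := ENNReal.one_rpow _

lemma eLpNorm_one_indicator_le (hB : MeasurableSet B) (hfin : ν B ≠ ⊤) (hpos : 0 < ν B)
    (hh : MemLp h 2 ν) (hnorm : eLpNorm h 2 ν = 1) :
    eLpNorm (B.indicator (fun x => h x - (ν B).toReal⁻¹ * ∫ y in B, h y ∂ν)) 1 ν
      ≤ (ν B) ^ ((1:ℝ)/2) := by
  set m : ℝ := (ν B).toReal⁻¹ * ∫ y in B, h y ∂ν with hmdef
  have hAESM : AEStronglyMeasurable (fun x => h x - m) (ν.restrict B) :=
    (hh.1.restrict).sub aestronglyMeasurable_const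
  have hle := eLpNorm_le_eLpNorm_mul_rpow_measure_univ (μ := ν.restrict B)
    (p := (1 : ℝ≥0∞)) (q := 2) (by norm_num) hAESM
  rw [Measure.restrict_apply_univ] at hle
  have hexp : (1 : ℝ)/(1:ℝ≥0∞).toReal - 1/(2:ℝ≥0∞).toReal = (1:ℝ)/2 := by norm_num
  rw [hexp] at hle
  have h2 : eLpNorm (fun x => h x - m) 2 (ν.restrict B) ≤ 1 := by
    have := eLpNorm_two_indicator_le_one hB hfin hpos hh hnorm
    rwa [eLpNorm_indicator_eq_eLpNorm_restrict hB] at this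
  rw [eLpNorm_indicator_eq_eLpNorm_restrict hB]
  calc eLpNorm (fun x => h x - m) 1 (ν.restrict B)
      ≤ eLpNorm (fun x => h x - m) 2 (ν.restrict B) * (ν B) ^ ((1:ℝ)/2) := hle
    _ ≤ 1 * (ν B) ^ ((1:ℝ)/2) := mul_le_mul_left h2 _
    _ = (ν B) ^ ((1:ℝ)/2) := one_mul _

end Ball2

section TsumUniq

lemma tsum_sq_of_uniq {v : ℕ → ℝ}
    (huniq : ∀ i j, v i ≠ 0 → v j ≠ 0 → i = j) :
    (∑' j, v j) ^ 2 = ∑' j, (v j) ^ 2 := by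
  by_cases hex : ∃ j, v j ≠ 0
  · obtain ⟨j0, hj0⟩ := hex
    rw [tsum_eq_single j0 (fun b hb => by_contra fun hb0 => hb (huniq b j0 hb0 hj0)),
      tsum_eq_single j0 (fun b hb => by
        by_contra hb0
        exact hb (huniq b j0 (fun hz => hb0 (by rw [hz]; ring)) hj0))]
  · push_neg at hex
    simp [hex]

lemma ennreal_tsum_le_of_uniq {v : ℕ → ℝ≥0∞} {c : ℝ≥0∞}
    (huniq : ∀ i j, v i ≠ 0 → v j ≠ 0 → i = j) (hbound : ∀ j, v j ≤ c) :
    ∑' j, v j ≤ c := by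
  by_cases hex : ∃ j, v j ≠ 0
  · obtain ⟨j0, hj0⟩ := hex
    rw [tsum_eq_single j0 (fun b hb => by_contra fun hb0 => hb (huniq b j0 hb0 hj0))]
    exact hbound j0
  · push_neg at hex
    simp [hex]

end TsumUniq

lemma enorm_sq_eq (y : ℝ) : (‖y‖₊ : ℝ≥0∞) ^ (2:ℝ) = ENNReal.ofReal (y ^ 2) := by
  rw [← ofReal_norm_eq_coe_nnnorm,
    ENNReal.ofReal_rpow_of_nonneg (norm_nonneg _) (by norm_num : (0:ℝ) ≤ 2)]
  congr 1
  rw [show (2:ℝ) = ((2:ℕ):ℝ) from by norm_num, Real.rpow_natCast, Real.norm_eq_abs, sq_abs]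



set_option maxHeartbeats 1000000 in
/-- Example: given `‖h‖_{L²(ν_k)} = 1` and closed balls `B_j` of positive measure contained in
the annuli `C_j = {4^{-(j+1)/(2γ+d)} ≤ ‖x‖ ≤ 4^{-j/(2γ+d)}}` (`j ≥ 1`), the functions
`a_j = ν_k(B_j)^{-1/2}(h - Avg_{B_j} h) χ_{B_j}` are `L²_k`-atoms, the series
`f = ∑_j ν_k(B_j)^{1/2} a_j` converges in `L¹(ν_k) ∩ L²(ν_k)`, `f ∈ H¹_k(ℝ^d)` and
`‖f‖_{H¹_k} ≤ ∑_j ν_k(B_j)^{1/2} ≤ √(d_k/(2γ+d))`.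
(The index `j : ℕ` below corresponds to the paper's index `j+1 ≥ 1`.) -/
theorem example_memH1_of_atoms_in_annuli {d : ℕ} (hd : 0 < d)
    (Rp : Finset (EuclideanSpace ℝ (Fin d))) (hRp : ∀ ξ ∈ Rp, ξ ≠ 0)
    (k : EuclideanSpace ℝ (Fin d) → ℝ) (hk : ∀ ξ ∈ Rp, 0 ≤ k ξ)
    (h : EuclideanSpace ℝ (Fin d) → ℝ) (hh : MemLp h 2 (dunklMeasure Rp k))
    (hnorm : eLpNorm h 2 (dunklMeasure Rp k) = 1)
    (c : ℕ → EuclideanSpace ℝ (Fin d)) (r : ℕ → ℝ) (hr : ∀ j, 0 < r j)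
    (hpos : ∀ j, 0 < (dunklMeasure Rp k) (closedBall (c j) (r j)))
    (hsub : ∀ j, closedBall (c j) (r j) ⊆
      {x : EuclideanSpace ℝ (Fin d) |
        (4 : ℝ) ^ (-((j : ℝ) + 2) / (2 * dunklGamma Rp k + d)) ≤ ‖x‖ ∧
          ‖x‖ ≤ (4 : ℝ) ^ (-((j : ℝ) + 1) / (2 * dunklGamma Rp k + d))})
    (a : ℕ → EuclideanSpace ℝ (Fin d) → ℝ)
    (ha : ∀ j, a j = Set.indicator (closedBall (c j) (r j)) fun x =>
      ((dunklMeasure Rp k) (closedBall (c j) (r j))).toReal ^ (-(1 : ℝ)/2)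
        * (h x - ((dunklMeasure Rp k) (closedBall (c j) (r j))).toReal⁻¹
            * ∫ y in closedBall (c j) (r j), h y ∂(dunklMeasure Rp k)))
    (lam : ℕ → ℝ)
    (hlam : ∀ j, lam j = ((dunklMeasure Rp k) (closedBall (c j) (r j))).toReal ^ ((1 : ℝ)/2))
    (f : EuclideanSpace ℝ (Fin d) → ℝ)
    (hf : ∀ x, f x = ∑' j, lam j * a j x) :
    (∀ j, IsL2Atom (dunklMeasure Rp k) (a j) (c j) (r j)) ∧
      IsAtomicDecomp (dunklMeasure Rp k) f lam a ∧
      MemH1 (dunklMeasure Rp k) f ∧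
      H1norm (dunklMeasure Rp k) f ≤ ∑' j, lam j ∧
      ∑' j, lam j ≤ Real.sqrt (dunklDk Rp k / (2 * dunklGamma Rp k + d)) := by
  classical
  have hγ0 : 0 ≤ dunklGamma Rp k := dunklGamma_nonneg Rp k hk
  have hD : (0:ℝ) < 2 * dunklGamma Rp k + d := by positivity
  have hBmeas : ∀ j, MeasurableSet (closedBall (c j) (r j)) :=
    fun j => measurableSet_closedBall
  have hfinB : ∀ j, dunklMeasure Rp k (closedBall (c j) (r j)) ≠ ⊤ :=
    fun j => (dunklMeasure_compact_lt_top Rp k hk (isCompact_closedBall _ _)).ne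
  have htpos : ∀ j, 0 < (dunklMeasure Rp k (closedBall (c j) (r j))).toReal :=
    fun j => ENNReal.toReal_pos (hpos j).ne' (hfinB j)
  set g : ℕ → EuclideanSpace ℝ (Fin d) → ℝ := fun j => (closedBall (c j) (r j)).indicator
    (fun x => h x - (dunklMeasure Rp k (closedBall (c j) (r j))).toReal⁻¹
      * ∫ y in closedBall (c j) (r j), h y ∂(dunklMeasure Rp k)) with hgdef
  have hlam_nonneg : ∀ j, 0 ≤ lam j := fun j => by
    rw [hlam]; exact Real.rpow_nonneg ENNReal.toReal_nonneg _
  have hga : ∀ j x, lam j * a j x = g j x := by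
    intro j x
    simp only [hgdef]
    rw [hlam, ha]
    by_cases hx : x ∈ closedBall (c j) (r j)
    · rw [indicator_of_mem hx, indicator_of_mem hx, ← mul_assoc, ← Real.rpow_add (htpos j),
        show (1:ℝ)/2 + -(1:ℝ)/2 = 0 from by norm_num, Real.rpow_zero, one_mul]
    · rw [indicator_of_notMem hx, indicator_of_notMem hx, mul_zero]
  have hsupp_a : ∀ j x, a j x ≠ 0 → x ∈ closedBall (c j) (r j) := fun j x hx => by
    by_contra hmem
    exact hx (by rw [ha]; exact indicator_of_notMem hmem _)
  have hsupp_g : ∀ j x, g j x ≠ 0 → x ∈ closedBall (c j) (r j) := fun j x hx => by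
    by_contra hmem
    exact hx (indicator_of_notMem hmem _)
  have hup : ∀ j, closedBall (c j) (r j) ⊆ closedBall (0 : EuclideanSpace ℝ (Fin d))
      ((4:ℝ) ^ (-((j:ℝ)+1)/(2 * dunklGamma Rp k + d))) :=
    fun j x hx => mem_closedBall_zero_iff.2 (hsub j hx).2
  have hlow : ∀ j, ∀ x ∈ closedBall (c j) (r j),
      (4:ℝ) ^ (-((j:ℝ)+2)/(2 * dunklGamma Rp k + d)) ≤ ‖x‖ :=
    fun j x hx => (hsub j hx).1
  have hkey2 : ∀ i j, i < j → ∀ x, x ∈ closedBall (c i) (r i) → x ∈ closedBall (c j) (r j) →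
      ‖x‖ = (4:ℝ) ^ (-((i:ℝ)+2)/(2 * dunklGamma Rp k + d)) := by
    intro i j hij x hxi hxj
    have h1 := hlow i x hxi
    have h2 := mem_closedBall_zero_iff.1 (hup j hxj)
    have h3 : (4:ℝ) ^ (-((j:ℝ)+1)/(2 * dunklGamma Rp k + d))
        ≤ (4:ℝ) ^ (-((i:ℝ)+2)/(2 * dunklGamma Rp k + d)) := by
      rw [Real.rpow_le_rpow_left_iff (by norm_num : (1:ℝ) < 4), div_eq_mul_inv, div_eq_mul_inv]
      have hcast : (i:ℝ) + 1 ≤ (j:ℝ) := by exact_mod_cast Nat.succ_le_of_lt hij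
      refine mul_le_mul_of_nonneg_right (by linarith) (inv_nonneg.2 hD.le)
    exact le_antisymm (h2.trans h3) h1
  have huniq_ae : ∀ᵐ x ∂(dunklMeasure Rp k), ∀ i j,
      x ∈ closedBall (c i) (r i) → x ∈ closedBall (c j) (r j) → i = j := by
    haveI : Nontrivial (EuclideanSpace ℝ (Fin d)) :=
      Module.nontrivial_of_finrank_pos (R := ℝ) (by rw [finrank_euclideanSpace_fin]; exact hd)
    have hsph : ∀ R : ℝ, dunklMeasure Rp k {x : EuclideanSpace ℝ (Fin d) | ‖x‖ = R} = 0 := by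
      intro R
      have hset : {x : EuclideanSpace ℝ (Fin d) | ‖x‖ = R} = sphere 0 R := by
        ext x; simp [mem_sphere_zero_iff_norm]
      rw [hset]
      exact dunklMeasure_null Rp k (Measure.addHaar_sphere volume 0 R)
    rw [ae_iff]
    refine measure_mono_null (fun x hx => ?_)
      (measure_iUnion_null (fun i : ℕ => hsph ((4:ℝ) ^ (-((i:ℝ)+2)/(2 * dunklGamma Rp k + d)))))
    simp only [mem_setOf_eq] at hx
    push_neg at hx
    obtain ⟨i, j, hxi, hxj, hij⟩ := hx
    rcases hij.lt_or_gt with hlt | hlt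
    · exact mem_iUnion.2 ⟨i, hkey2 i j hlt x hxi hxj⟩
    · exact mem_iUnion.2 ⟨j, hkey2 j i hlt x hxj hxi⟩
  have hfinsupp : ∀ x, {j : ℕ | x ∈ closedBall (c j) (r j)}.Finite := by
    intro x
    by_cases hex : ∃ j, x ∈ closedBall (c j) (r j)
    · obtain ⟨j0, hj0⟩ := hex
      refine (finite_Iic (j0 + 1)).subset ?_
      intro j hj
      simp only [mem_setOf_eq] at hj
      simp only [mem_Iic]
      by_contra hgt
      push_neg at hgt
      have h1 := hlow j0 x hj0
      have h2 := mem_closedBall_zero_iff.1 (hup j hj)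
      have h3 : (4:ℝ) ^ (-((j:ℝ)+1)/(2 * dunklGamma Rp k + d))
          < (4:ℝ) ^ (-((j0:ℝ)+2)/(2 * dunklGamma Rp k + d)) := by
        rw [Real.rpow_lt_rpow_left_iff (by norm_num : (1:ℝ) < 4), div_eq_mul_inv, div_eq_mul_inv]
        have hcast : (j0:ℝ) + 1 < (j:ℝ) := by exact_mod_cast hgt
        refine mul_lt_mul_of_pos_right (by linarith) (inv_pos.2 hD)
      linarith
    · push_neg at hex
      refine Set.Finite.subset finite_empty (fun j hj => ?_)
      exact absurd hj (hex j)
  have hfin_shift : ∀ (N : ℕ) x, ({i : ℕ | x ∈ closedBall (c (i+N)) (r (i+N))}).Finite :=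
    fun N x => Set.Finite.preimage ((add_left_injective N).injOn) (hfinsupp x)
  have hsummable : ∀ x, Summable (fun j => lam j * a j x) := by
    intro x
    apply summable_of_finite_support
    refine (hfinsupp x).subset (fun j hj => ?_)
    simp only [Function.mem_support] at hj
    exact hsupp_a j x (right_ne_zero_of_mul hj)
  have hsummg : ∀ x, Summable (fun j => g j x) :=
    fun x => (hsummable x).congr (fun j => hga j x)
  have hsummg_shift : ∀ (N : ℕ) x, Summable (fun i => g (i+N) x) := by
    intro N x
    apply summable_of_finite_support
    refine (hfin_shift N x).subset (fun i hi => ?_)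
    simp only [Function.mem_support] at hi
    exact hsupp_g _ x hi
  have hsummg_norm : ∀ (N : ℕ) x, Summable (fun i => ‖g (i+N) x‖) := by
    intro N x
    apply summable_of_finite_support
    refine (hfin_shift N x).subset (fun i hi => ?_)
    simp only [Function.mem_support, norm_ne_zero_iff] at hi
    exact hsupp_g _ x hi
  have hsummg_sq : ∀ (N : ℕ) x, Summable (fun i => (g (i+N) x)^2) := by
    intro N x
    apply summable_of_finite_support
    refine (hfin_shift N x).subset (fun i hi => ?_)
    simp only [Function.mem_support] at hi
    exact hsupp_g _ x (fun hz => hi (by rw [hz]; ring))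
  have htail : ∀ (N : ℕ) x, f x - ∑ j ∈ Finset.range N, lam j * a j x = ∑' i, g (i + N) x := by
    intro N x
    have h1 := Summable.sum_add_tsum_nat_add (f := fun j => g j x) N (hsummg x)
    have h2 : f x = ∑' j, g j x := by rw [hf]; exact tsum_congr fun j => hga j x
    have h3 : ∑ j ∈ Finset.range N, lam j * a j x = ∑ j ∈ Finset.range N, g j x :=
      Finset.sum_congr rfl fun j _ => hga j x
    rw [h2, h3, ← h1]
    ring
  have hAESM_g : ∀ j, AEStronglyMeasurable (g j) (dunklMeasure Rp k) :=
    fun j => ((hh.1.sub aestronglyMeasurable_const).indicator (hBmeas j))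
  have hAESM_a : ∀ j, AEStronglyMeasurable (a j) (dunklMeasure Rp k) := fun j => by
    rw [ha]
    exact ((hh.1.sub aestronglyMeasurable_const).const_mul _).indicator (hBmeas j)
  have hg1 : ∀ j, eLpNorm (g j) 1 (dunklMeasure Rp k)
      ≤ (dunklMeasure Rp k (closedBall (c j) (r j))) ^ ((1:ℝ)/2) :=
    fun j => eLpNorm_one_indicator_le (hBmeas j) (hfinB j) (hpos j) hh hnorm
  have hofReal : ∀ j, (dunklMeasure Rp k (closedBall (c j) (r j))) ^ ((1:ℝ)/2)
      = ENNReal.ofReal (lam j) := by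
    intro j
    rw [hlam]
    calc (dunklMeasure Rp k (closedBall (c j) (r j))) ^ ((1:ℝ)/2)
        = (ENNReal.ofReal ((dunklMeasure Rp k (closedBall (c j) (r j))).toReal)) ^ ((1:ℝ)/2) := by
          rw [ENNReal.ofReal_toReal (hfinB j)]
      _ = ENNReal.ofReal (((dunklMeasure Rp k (closedBall (c j) (r j))).toReal) ^ ((1:ℝ)/2)) :=
          ENNReal.ofReal_rpow_of_pos (htpos j)
  have hlam_le : ∀ j, lam j ≤ Real.sqrt (dunklDk Rp k / (2 * dunklGamma Rp k + d))
      * (2:ℝ) ^ (-((j:ℝ)+1)) := fun j => by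
    rw [hlam]
    exact lam_le_bound Rp k hd hk (hup j)
  have h2pow : ∀ j : ℕ, (2:ℝ) ^ (-((j:ℝ)+1)) = (1/2:ℝ)^(j+1) := by
    intro j
    rw [show -((j:ℝ)+1) = -(((j+1 : ℕ)):ℝ) from by push_cast; ring,
      Real.rpow_neg (by norm_num), Real.rpow_natCast, one_div, inv_pow]
  have hbnd_summ : Summable (fun j : ℕ =>
      Real.sqrt (dunklDk Rp k / (2 * dunklGamma Rp k + d)) * (2:ℝ) ^ (-((j:ℝ)+1))) := by
    have hs : Summable (fun j : ℕ =>
        (Real.sqrt (dunklDk Rp k / (2 * dunklGamma Rp k + d)) * (1/2)) * (1/2:ℝ)^j) :=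
      (summable_geometric_of_lt_one (by norm_num) (by norm_num)).mul_left _
    exact hs.congr (fun j => by rw [h2pow j, pow_succ]; ring)
  have hlam_summ : Summable lam := Summable.of_nonneg_of_le hlam_nonneg hlam_le hbnd_summ
  have htsum_le : ∑' j, lam j ≤ Real.sqrt (dunklDk Rp k / (2 * dunklGamma Rp k + d)) := by
    have htsum_bnd : ∑' j : ℕ, Real.sqrt (dunklDk Rp k / (2 * dunklGamma Rp k + d))
        * (2:ℝ) ^ (-((j:ℝ)+1)) = Real.sqrt (dunklDk Rp k / (2 * dunklGamma Rp k + d)) := by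
      calc ∑' j : ℕ, Real.sqrt (dunklDk Rp k / (2 * dunklGamma Rp k + d)) * (2:ℝ)^(-((j:ℝ)+1))
          = ∑' j : ℕ, (Real.sqrt (dunklDk Rp k / (2 * dunklGamma Rp k + d)) * (1/2)) * (1/2:ℝ)^j :=
            tsum_congr (fun j => by rw [h2pow j, pow_succ]; ring)
        _ = (Real.sqrt (dunklDk Rp k / (2 * dunklGamma Rp k + d)) * (1/2))
              * ∑' j : ℕ, (1/2:ℝ)^j := tsum_mul_left
        _ = _ := by
            rw [tsum_geometric_of_lt_one (by norm_num) (by norm_num)]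
            have h12 : (1 - (1:ℝ)/2)⁻¹ = 2 := by norm_num
            rw [h12]
            ring
    rw [← htsum_bnd]
    exact Summable.tsum_le_tsum hlam_le hlam_summ hbnd_summ
  have hT1fin : ∑' j, ENNReal.ofReal (lam j) ≠ ⊤ := by
    rw [← ENNReal.ofReal_tsum_of_nonneg hlam_nonneg hlam_summ]
    exact ENNReal.ofReal_ne_top
  have hL1 : ∀ N : ℕ, eLpNorm (fun x => f x - ∑ j ∈ Finset.range N, lam j * a j x) 1
      (dunklMeasure Rp k) ≤ ∑' i, ENNReal.ofReal (lam (i + N)) := by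
    intro N
    rw [show (fun x => f x - ∑ j ∈ Finset.range N, lam j * a j x)
        = fun x => ∑' i, g (i+N) x from funext (htail N),
      eLpNorm_one_eq_lintegral_enorm]
    have hpt : ∀ x, (‖∑' i, g (i+N) x‖₊ : ℝ≥0∞) ≤ ∑' i, (‖g (i+N) x‖₊ : ℝ≥0∞) := by
      intro x
      calc (‖∑' i, g (i+N) x‖₊ : ℝ≥0∞) = ENNReal.ofReal ‖∑' i, g (i+N) x‖ :=
            (ofReal_norm_eq_coe_nnnorm _).symm
        _ ≤ ENNReal.ofReal (∑' i, ‖g (i+N) x‖) :=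
            ENNReal.ofReal_le_ofReal (norm_tsum_le_tsum_norm (hsummg_norm N x))
        _ = ∑' i, ENNReal.ofReal ‖g (i+N) x‖ :=
            ENNReal.ofReal_tsum_of_nonneg (fun i => norm_nonneg _) (hsummg_norm N x)
        _ = ∑' i, (‖g (i+N) x‖₊ : ℝ≥0∞) := tsum_congr fun i => ofReal_norm_eq_coe_nnnorm _
    calc ∫⁻ x, (‖∑' i, g (i+N) x‖₊ : ℝ≥0∞) ∂(dunklMeasure Rp k)
        ≤ ∫⁻ x, ∑' i, (‖g (i+N) x‖₊ : ℝ≥0∞) ∂(dunklMeasure Rp k) := lintegral_mono hpt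
      _ = ∑' i, ∫⁻ x, (‖g (i+N) x‖₊ : ℝ≥0∞) ∂(dunklMeasure Rp k) :=
          lintegral_tsum fun i => (hAESM_g (i+N)).enorm
      _ ≤ ∑' i, ENNReal.ofReal (lam (i+N)) := ENNReal.tsum_le_tsum fun i => by
          rw [← hofReal (i+N)]
          calc ∫⁻ x, (‖g (i+N) x‖₊ : ℝ≥0∞) ∂(dunklMeasure Rp k)
              = eLpNorm (g (i+N)) 1 (dunklMeasure Rp k) :=
                (eLpNorm_one_eq_lintegral_enorm (f := g (i+N))).symm
            _ ≤ _ := hg1 (i+N)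
  have hL1tend : Tendsto (fun N : ℕ => eLpNorm
      (fun x => f x - ∑ j ∈ Finset.range N, lam j * a j x) 1 (dunklMeasure Rp k))
      atTop (nhds 0) := by
    refine tendsto_of_tendsto_of_tendsto_of_le_of_le tendsto_const_nhds
      (ENNReal.tendsto_sum_nat_add _ hT1fin) (fun N => zero_le) hL1
  -- L² part
  have hEfin : ∑' j, (∫⁻ x in closedBall (c j) (r j), (‖h x‖₊ : ℝ≥0∞)^(2:ℝ)
      ∂(dunklMeasure Rp k)) ≤ 1 := by
    have haem : AEMeasurable (fun x => (‖h x‖₊ : ℝ≥0∞)^(2:ℝ)) (dunklMeasure Rp k) :=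
      (ENNReal.continuous_rpow_const.measurable).comp_aemeasurable hh.1.enorm
    calc ∑' j, (∫⁻ x in closedBall (c j) (r j), (‖h x‖₊ : ℝ≥0∞)^(2:ℝ) ∂(dunklMeasure Rp k))
        = ∑' j, ∫⁻ x, (closedBall (c j) (r j)).indicator
            (fun x => (‖h x‖₊ : ℝ≥0∞)^(2:ℝ)) x ∂(dunklMeasure Rp k) :=
          tsum_congr fun j => (lintegral_indicator (hBmeas j) _).symm
      _ = ∫⁻ x, ∑' j, (closedBall (c j) (r j)).indicator
            (fun x => (‖h x‖₊ : ℝ≥0∞)^(2:ℝ)) x ∂(dunklMeasure Rp k) :=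
          (lintegral_tsum fun j => haem.indicator (hBmeas j)).symm
      _ ≤ ∫⁻ x, (‖h x‖₊ : ℝ≥0∞)^(2:ℝ) ∂(dunklMeasure Rp k) := by
          refine lintegral_mono_ae (huniq_ae.mono fun x hx => ?_)
          refine ennreal_tsum_le_of_uniq (fun i j hi hj => hx i j ?_ ?_) (fun j => ?_)
          · by_contra hmem
            exact hi (indicator_of_notMem hmem _)
          · by_contra hmem
            exact hj (indicator_of_notMem hmem _)
          · by_cases hx' : x ∈ closedBall (c j) (r j)
            · rw [indicator_of_mem hx']
            · rw [indicator_of_notMem hx']; exact zero_le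
      _ = ENNReal.ofReal (∫ x, h x^2 ∂(dunklMeasure Rp k)) :=
          lintegral_nnnorm_sq_eq hh.integrable_sq
      _ = 1 := by rw [integral_sq_eq_one hh hnorm, ENNReal.ofReal_one]
  have hEneTop : ∑' j, (∫⁻ x in closedBall (c j) (r j), (‖h x‖₊ : ℝ≥0∞)^(2:ℝ)
      ∂(dunklMeasure Rp k)) ≠ ⊤ := (lt_of_le_of_lt hEfin ENNReal.one_lt_top).ne
  have hL2 : ∀ N : ℕ, eLpNorm (fun x => f x - ∑ j ∈ Finset.range N, lam j * a j x) 2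
      (dunklMeasure Rp k) ≤ (∑' i, (∫⁻ x in closedBall (c (i+N)) (r (i+N)),
        (‖h x‖₊ : ℝ≥0∞)^(2:ℝ) ∂(dunklMeasure Rp k))) ^ ((1:ℝ)/2) := by
    intro N
    rw [show (fun x => f x - ∑ j ∈ Finset.range N, lam j * a j x)
        = fun x => ∑' i, g (i+N) x from funext (htail N),
      eLpNorm_two_eq]
    refine ENNReal.rpow_le_rpow ?_ (by norm_num)
    have hae : ∀ᵐ x ∂(dunklMeasure Rp k), (‖∑' i, g (i+N) x‖₊ : ℝ≥0∞)^(2:ℝ)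
        = ∑' i, (‖g (i+N) x‖₊ : ℝ≥0∞)^(2:ℝ) := by
      refine huniq_ae.mono fun x hx => ?_
      have huniq' : ∀ i₁ i₂, g (i₁+N) x ≠ 0 → g (i₂+N) x ≠ 0 → i₁ = i₂ :=
        fun i₁ i₂ h1 h2 => Nat.add_right_cancel (hx _ _ (hsupp_g _ x h1) (hsupp_g _ x h2))
      calc (‖∑' i, g (i+N) x‖₊ : ℝ≥0∞)^(2:ℝ)
          = ENNReal.ofReal ((∑' i, g (i+N) x)^2) := enorm_sq_eq _
        _ = ENNReal.ofReal (∑' i, (g (i+N) x)^2) := by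
            rw [tsum_sq_of_uniq huniq']
        _ = ∑' i, ENNReal.ofReal ((g (i+N) x)^2) :=
            ENNReal.ofReal_tsum_of_nonneg (fun i => sq_nonneg _) (hsummg_sq N x)
        _ = ∑' i, (‖g (i+N) x‖₊ : ℝ≥0∞)^(2:ℝ) := tsum_congr fun i => (enorm_sq_eq _).symm
    show ∫⁻ x, (‖∑' i, g (i+N) x‖₊ : ℝ≥0∞)^(2:ℝ) ∂(dunklMeasure Rp k) ≤ _
    rw [lintegral_congr_ae hae,
      lintegral_tsum (f := fun i x => (‖g (i+N) x‖₊ : ℝ≥0∞) ^ (2:ℝ))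
        (fun i => (ENNReal.continuous_rpow_const.measurable).comp_aemeasurable
          (hAESM_g (i+N)).enorm)]
    exact ENNReal.tsum_le_tsum fun i =>
      lintegral_sq_indicator_le (hBmeas _) (hfinB _) (hpos _) hh
  have hL2tend : Tendsto (fun N : ℕ => eLpNorm
      (fun x => f x - ∑ j ∈ Finset.range N, lam j * a j x) 2 (dunklMeasure Rp k))
      atTop (nhds 0) := by
    have h0 := ENNReal.tendsto_sum_nat_add (fun j => ∫⁻ x in closedBall (c j) (r j),
      (‖h x‖₊ : ℝ≥0∞)^(2:ℝ) ∂(dunklMeasure Rp k)) hEneTop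
    have hc : Tendsto (fun z : ℝ≥0∞ => z ^ ((1:ℝ)/2)) (nhds 0) (nhds 0) := by
      have := (ENNReal.continuous_rpow_const (y := (1:ℝ)/2)).tendsto 0
      rwa [ENNReal.zero_rpow_of_pos (by norm_num)] at this
    exact tendsto_of_tendsto_of_tendsto_of_le_of_le tendsto_const_nhds
      (hc.comp h0) (fun N => zero_le) hL2
  -- measurability and MemLp of f
  have hpart_AESM : ∀ N : ℕ, AEStronglyMeasurable
      (fun x => ∑ j ∈ Finset.range N, lam j * a j x) (dunklMeasure Rp k) :=
    fun N => Finset.aestronglyMeasurable_fun_sum _ (fun j _ => (hAESM_a j).const_mul _)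
  have hfAESM : AEStronglyMeasurable f (dunklMeasure Rp k) :=
    aestronglyMeasurable_of_tendsto_ae atTop hpart_AESM (ae_of_all _ fun x => by
      rw [hf]; exact (hsummable x).hasSum.tendsto_sum_nat)
  have hf_eq_tail0 : f = fun x => ∑' i, g (i + 0) x := by
    funext x
    have := htail 0 x
    simpa using this
  have hf1 : MemLp f 1 (dunklMeasure Rp k) := by
    refine ⟨hfAESM, ?_⟩
    have hb := hL1 0
    rw [show (fun x => f x - ∑ j ∈ Finset.range 0, lam j * a j x) = f from by
      funext x; simp] at hb
    refine lt_of_le_of_lt hb ?_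
    refine lt_of_le_of_lt (le_of_eq (tsum_congr fun i => by rw [Nat.add_zero])) ?_
    exact hT1fin.lt_top
  have hf2 : MemLp f 2 (dunklMeasure Rp k) := by
    refine ⟨hfAESM, ?_⟩
    have hb := hL2 0
    rw [show (fun x => f x - ∑ j ∈ Finset.range 0, lam j * a j x) = f from by
      funext x; simp] at hb
    refine lt_of_le_of_lt hb ?_
    have : (∑' i, (∫⁻ x in closedBall (c (i+0)) (r (i+0)),
        (‖h x‖₊ : ℝ≥0∞)^(2:ℝ) ∂(dunklMeasure Rp k))) ≤ 1 := by
      refine le_trans (le_of_eq (tsum_congr fun i => by rw [Nat.add_zero])) hEfin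
    calc (∑' i, (∫⁻ x in closedBall (c (i+0)) (r (i+0)),
          (‖h x‖₊ : ℝ≥0∞)^(2:ℝ) ∂(dunklMeasure Rp k))) ^ ((1:ℝ)/2)
        ≤ (1 : ℝ≥0∞) ^ ((1:ℝ)/2) := ENNReal.rpow_le_rpow this (by norm_num)
      _ = 1 := ENNReal.one_rpow _
      _ < ⊤ := ENNReal.one_lt_top
  -- the atoms
  have hatom : ∀ j, IsL2Atom (dunklMeasure Rp k) (a j) (c j) (r j) := by
    intro j
    have hCnn : 0 ≤ ((dunklMeasure Rp k (closedBall (c j) (r j))).toReal) ^ (-(1:ℝ)/2) :=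
      Real.rpow_nonneg ENNReal.toReal_nonneg _
    refine ⟨?_, ?_, ?_, ?_⟩
    · -- MemLp
      have heq : a j = fun x =>
          ((dunklMeasure Rp k (closedBall (c j) (r j))).toReal ^ (-(1:ℝ)/2))
            * ((closedBall (c j) (r j)).indicator h x)
          - (((dunklMeasure Rp k (closedBall (c j) (r j))).toReal ^ (-(1:ℝ)/2))
              * ((dunklMeasure Rp k (closedBall (c j) (r j))).toReal⁻¹
                * ∫ y in closedBall (c j) (r j), h y ∂(dunklMeasure Rp k)))
            * ((closedBall (c j) (r j)).indicator (fun _ => (1:ℝ)) x) := by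
        funext x
        rw [ha]
        by_cases hx : x ∈ closedBall (c j) (r j)
        · simp only [indicator_of_mem hx]
          ring
        · simp only [indicator_of_notMem hx]
          ring
      rw [heq]
      exact ((hh.indicator (hBmeas j)).const_mul _).sub
        ((memLp_indicator_const 2 (hBmeas j) (1:ℝ) (Or.inr (hfinB j))).const_mul _)
    · -- support
      rw [ha]
      exact Set.support_indicator_subset
    · -- L² bound
      have hpt : ∀ x, |a j x|^2 = (closedBall (c j) (r j)).indicator
          (fun x => (((dunklMeasure Rp k (closedBall (c j) (r j))).toReal ^ (-(1:ℝ)/2))^2)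
            * (h x - (dunklMeasure Rp k (closedBall (c j) (r j))).toReal⁻¹
              * ∫ y in closedBall (c j) (r j), h y ∂(dunklMeasure Rp k))^2) x := by
        intro x
        rw [ha]
        by_cases hx : x ∈ closedBall (c j) (r j)
        · rw [indicator_of_mem hx, indicator_of_mem hx, sq_abs, mul_pow]
        · rw [indicator_of_notMem hx, indicator_of_notMem hx]
          norm_num
      have hI : ∫ x, |a j x|^2 ∂(dunklMeasure Rp k)
          = (((dunklMeasure Rp k (closedBall (c j) (r j))).toReal ^ (-(1:ℝ)/2))^2)
            * ∫ x in closedBall (c j) (r j),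
              (h x - (dunklMeasure Rp k (closedBall (c j) (r j))).toReal⁻¹
                * ∫ y in closedBall (c j) (r j), h y ∂(dunklMeasure Rp k))^2
              ∂(dunklMeasure Rp k) := by
        simp_rw [hpt]
        rw [integral_indicator (hBmeas j)]
        calc ∫ x in closedBall (c j) (r j),
              (((dunklMeasure Rp k (closedBall (c j) (r j))).toReal ^ (-(1:ℝ)/2))^2)
                * (h x - (dunklMeasure Rp k (closedBall (c j) (r j))).toReal⁻¹
                  * ∫ y in closedBall (c j) (r j), h y ∂(dunklMeasure Rp k))^2
                ∂(dunklMeasure Rp k)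
            = ∫ x in closedBall (c j) (r j),
                (((dunklMeasure Rp k (closedBall (c j) (r j))).toReal ^ (-(1:ℝ)/2))^2)
                  • (h x - (dunklMeasure Rp k (closedBall (c j) (r j))).toReal⁻¹
                    * ∫ y in closedBall (c j) (r j), h y ∂(dunklMeasure Rp k))^2
                  ∂(dunklMeasure Rp k) := by simp [smul_eq_mul]
          _ = _ := by rw [integral_smul]; simp [smul_eq_mul]
      have hle1 : ∫ x in closedBall (c j) (r j),
          (h x - (dunklMeasure Rp k (closedBall (c j) (r j))).toReal⁻¹
            * ∫ y in closedBall (c j) (r j), h y ∂(dunklMeasure Rp k))^2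
          ∂(dunklMeasure Rp k) ≤ 1 := by
        refine (setIntegral_sq_sub_avg_le (hfinB j) (hpos j) hh).trans ?_
        refine le_trans (setIntegral_le_integral hh.integrable_sq
          (ae_of_all _ fun x => sq_nonneg _)) ?_
        rw [integral_sq_eq_one hh hnorm]
      have hle2 : ∫ x, |a j x|^2 ∂(dunklMeasure Rp k)
          ≤ (((dunklMeasure Rp k (closedBall (c j) (r j))).toReal ^ (-(1:ℝ)/2))^2) := by
        rw [hI]
        calc _ ≤ (((dunklMeasure Rp k (closedBall (c j) (r j))).toReal ^ (-(1:ℝ)/2))^2) * 1 :=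
              mul_le_mul_of_nonneg_left hle1 (sq_nonneg _)
          _ = _ := mul_one _
      have hfinal : (∫ x, |a j x|^2 ∂(dunklMeasure Rp k)) ^ ((1:ℝ)/2)
          ≤ ((((dunklMeasure Rp k (closedBall (c j) (r j))).toReal ^ (-(1:ℝ)/2))^2)) ^ ((1:ℝ)/2) :=
        Real.rpow_le_rpow (integral_nonneg fun x => sq_nonneg _) hle2 (by norm_num)
      refine hfinal.trans_eq ?_
      rw [← Real.rpow_natCast (((dunklMeasure Rp k (closedBall (c j) (r j))).toReal
        ^ (-(1:ℝ)/2))) 2, ← Real.rpow_mul hCnn]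
      norm_num
    · -- zero integral
      have hEq : EqOn (a j) (fun x =>
          ((dunklMeasure Rp k (closedBall (c j) (r j))).toReal ^ (-(1:ℝ)/2))
            * (h x - (dunklMeasure Rp k (closedBall (c j) (r j))).toReal⁻¹
              * ∫ y in closedBall (c j) (r j), h y ∂(dunklMeasure Rp k)))
          (closedBall (c j) (r j)) := fun x hx => by
        rw [ha]; exact indicator_of_mem hx _
      rw [setIntegral_congr_fun (hBmeas j) hEq]
      have hpull : ∫ x in closedBall (c j) (r j),
          ((dunklMeasure Rp k (closedBall (c j) (r j))).toReal ^ (-(1:ℝ)/2))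
            * (h x - (dunklMeasure Rp k (closedBall (c j) (r j))).toReal⁻¹
              * ∫ y in closedBall (c j) (r j), h y ∂(dunklMeasure Rp k)) ∂(dunklMeasure Rp k)
          = ((dunklMeasure Rp k (closedBall (c j) (r j))).toReal ^ (-(1:ℝ)/2))
            * ∫ x in closedBall (c j) (r j),
              (h x - (dunklMeasure Rp k (closedBall (c j) (r j))).toReal⁻¹
                * ∫ y in closedBall (c j) (r j), h y ∂(dunklMeasure Rp k)) ∂(dunklMeasure Rp k) := by
        calc _ = ∫ x in closedBall (c j) (r j),
              ((dunklMeasure Rp k (closedBall (c j) (r j))).toReal ^ (-(1:ℝ)/2))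
                • (h x - (dunklMeasure Rp k (closedBall (c j) (r j))).toReal⁻¹
                  * ∫ y in closedBall (c j) (r j), h y ∂(dunklMeasure Rp k)) ∂(dunklMeasure Rp k) := by
              simp [smul_eq_mul]
          _ = _ := by rw [integral_smul]; simp [smul_eq_mul]
      rw [hpull, setIntegral_sub_avg (hfinB j) (hpos j) hh, mul_zero]
  -- assemble
  have hsumm_abs : Summable (fun j => |lam j|) :=
    hlam_summ.congr (fun j => (abs_of_nonneg (hlam_nonneg j)).symm)
  have hdecomp : IsAtomicDecomp (dunklMeasure Rp k) f lam a :=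
    ⟨fun j => ⟨c j, r j, hr j, hatom j⟩, hsumm_abs, hL1tend, hL2tend⟩
  have hH1 : H1norm (dunklMeasure Rp k) f ≤ ∑' j, lam j := by
    have hmem : (∑' j, lam j) ∈ {s : ℝ | ∃ lam' a',
        IsAtomicDecomp (dunklMeasure Rp k) f lam' a' ∧ s = ∑' j, |lam' j|} :=
      ⟨lam, a, hdecomp, tsum_congr fun j => (abs_of_nonneg (hlam_nonneg j)).symm⟩
    refine csInf_le ⟨0, fun s hs => ?_⟩ hmem
    obtain ⟨lam', a', _, rfl⟩ := hs
    exact tsum_nonneg fun j => abs_nonneg _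
  exact ⟨hatom, hdecomp, ⟨hf1, hf2, lam, a, hdecomp⟩, hH1, htsum_le⟩
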